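/- Let N be a finite set with |N| ≥ 2 and let S be a nontrivial set system on N. Then S is semi-balanced on N if and only if the complementary system S* := {N\S : S ∈ S} is semi-balanced on N. -/

import Mathlib

open Finset

variable {α : Type*} [Fintype α] [DecidableEq α]

/-- Incidence (0/1 indicator) vector of a subset `S` of the player set. -/
def chi (S : Finset α) : α → ℝ := fun i => if i ∈ S then 1 else 0

/-- A non-trivial set system on `N`: nonempty, not containing `∅` nor `N`. -/
def IsNontrivial (𝒮 : Finset (Finset α)) : Prop :=
  𝒮.Nonempty ∧ ∅ ∉ 𝒮 ∧ (Finset.univ : Finset α) ∉ 𝒮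

/-- A combination is semi-conic if at most one coefficient is strictly negative. -/
def SemiConic (𝒮 : Finset (Finset α)) (lam : Finset α → ℝ) : Prop :=
  (𝒮.filter fun S => lam S < 0).card ≤ 1

/-- The combination `∑_{S ∈ 𝒮} lam S • χ_S` yields the constant vector `[r,…,r]`. -/
def CombYields (𝒮 : Finset (Finset α)) (lam : Finset α → ℝ) (r : ℝ) : Prop :=
  ∀ i : α, ∑ S ∈ 𝒮, lam S * chi S i = r

/-- A semi-balanced set system on `N`. -/
def IsSemiBalanced (𝒮 : Finset (Finset α)) : Prop :=
  IsNontrivial 𝒮 ∧ ∃ (lam : Finset α → ℝ) (r : ℝ),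
    CombYields 𝒮 lam r ∧ SemiConic 𝒮 lam ∧ ∀ S ∈ 𝒮, lam S ≠ 0

/-- A minimal semi-balanced set system on `N`. -/
def IsMinSemiBalanced (𝒮 : Finset (Finset α)) : Prop :=
  IsSemiBalanced 𝒮 ∧ ∀ 𝒞 ⊂ 𝒮, ¬ IsSemiBalanced 𝒞

/-- A balanced set system on `N`. -/
def IsBalanced (ℬ : Finset (Finset α)) : Prop :=
  IsNontrivial ℬ ∧ ∃ lam : Finset α → ℝ,
    (∀ S ∈ ℬ, 0 < lam S) ∧ ∀ i : α, ∑ S ∈ ℬ, lam S * chi S i = 1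

/-- A minimal balanced set system on `N`. -/
def IsMinBalanced (ℬ : Finset (Finset α)) : Prop :=
  IsBalanced ℬ ∧ ∀ 𝒞 ⊂ ℬ, ¬ IsBalanced 𝒞

/-- A set `T ∈ 𝒮` is exceptional within `𝒮`. -/
def IsExceptional (𝒮 : Finset (Finset α)) (T : Finset α) : Prop :=
  T ∈ 𝒮 ∧ ∃ (lam : Finset α → ℝ) (r : ℝ),
    CombYields 𝒮 lam r ∧ lam T < 0 ∧ ∀ S ∈ 𝒮, S ≠ T → 0 ≤ lam S

lemma compl_inj' : Function.Injective (fun S : Finset α => Sᶜ) :=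
  fun a b h => by simpa using congrArg (fun x => xᶜ) h

lemma semiBalanced_compl_of (𝒮 : Finset (Finset α)) (h : IsSemiBalanced 𝒮) :
    IsSemiBalanced (𝒮.image fun S => Sᶜ) := by
  obtain ⟨⟨hne, hemp, huniv⟩, lam, r, hcomb, hsc, hnz⟩ := h
  refine ⟨⟨hne.image _, ?_, ?_⟩, fun T => lam Tᶜ, (∑ S ∈ 𝒮, lam S) - r, ?_, ?_, ?_⟩
  · intro h
    obtain ⟨S, hS, hSc⟩ := Finset.mem_image.mp h
    have : S = Finset.univ := by
      simpa [Finset.eq_univ_iff_forall, Finset.eq_empty_iff_forall_notMem] using hSc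
    exact huniv (this ▸ hS)
  · intro h
    obtain ⟨S, hS, hSc⟩ := Finset.mem_image.mp h
    have : S = ∅ := by
      have := congrArg (fun x : Finset α => xᶜ) hSc
      simpa using this
    exact hemp (this ▸ hS)
  · intro i
    rw [Finset.sum_image (fun a _ b _ h => compl_inj' h)]
    have : ∀ S ∈ 𝒮, lam Sᶜᶜ * chi Sᶜ i = lam S - lam S * chi S i := by
      intro S hS
      by_cases hi : i ∈ S <;> simp [chi, hi, compl_compl]
    rw [Finset.sum_congr rfl this, Finset.sum_sub_distrib, hcomb i]
  · unfold SemiConic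
    rw [Finset.filter_image, Finset.card_image_of_injective _ compl_inj']
    simpa [compl_compl, SemiConic] using hsc
  · intro T hT
    obtain ⟨S, hS, rfl⟩ := Finset.mem_image.mp hT
    simpa [compl_compl] using hnz S hS

theorem stmt8 (h2 : 2 ≤ Fintype.card α) (𝒮 : Finset (Finset α))
    (hnt : IsNontrivial 𝒮) :
    IsSemiBalanced 𝒮 ↔ IsSemiBalanced (𝒮.image fun S => Sᶜ) := by
  constructor
  · exact semiBalanced_compl_of 𝒮
  · intro h
    have := semiBalanced_compl_of _ h
    rwa [Finset.image_image, show ((fun S : Finset α => Sᶜ) ∘ fun S => Sᶜ) = id by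
      funext S; simp, Finset.image_id] at this
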